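/- Let X = Y₀ ⊔ Y₁ ⊔ ⋯ ⊔ Y_s be a partition of a finite alphabet, let k₀,…,k_s ≥ 0 with n = k₀+⋯+k_s, let σ_j be the indicator function of Y_j, and let g and ≤_g be the order of the auxiliary lexicographic construction with constant weight τ = 1. Let C ⊆ Xⁿ, let A be the set of words w = (a₁⋯a_n) ∈ C having at most k_j letters from Y_j for each j = 1,…,s, and let B = C ∩ (Y₀^{k₀} × Y₁^{k₁} × ⋯ × Y_s^{k_s}). Then for every w₁ ∈ B and w₂ ∈ A with w₁ ≤_g w₂, one has w₂ ∈ B. -/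

import Mathlib

def sigmaStar {X : Type*} (σ : X → ℕ) (w : List X) : ℕ :=
  (w.map σ).sum

def sigmaSharp {X : Type*} [Inhabited X] (τ σ : X → ℕ) (w : List X) : ℕ :=
  ∑ i ∈ Finset.range w.length, σ (w.getD i default) * sigmaStar τ (w.take (i + 1))

def keysLe {X : Type*} [LinearOrder X] :
    List (List X → ℕ) → List X → List X → Prop
  | [], w, w' => List.Lex (· < ·) w w' ∨ w = w'
  | k :: ks, w, w' => k w < k w' ∨ (k w = k w' ∧ keysLe ks w w')

/-- The order `≤_g` of the auxiliary lexicographic construction. -/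
def gLe {X : Type*} [Inhabited X] [LinearOrder X] (τ : X → ℕ) {s : ℕ}
    (σ : Fin s → X → ℕ) : List X → List X → Prop :=
  keysLe (sigmaStar τ ::
    (List.finRange s).reverse.flatMap
      (fun j => [sigmaStar (σ j), sigmaSharp τ (σ j)]))

set_option linter.unusedSectionVars false
namespace Stmt7

variable {X : Type*} [Inhabited X] [DecidableEq X]

lemma sigmaStar_one (w : List X) : sigmaStar (fun _ : X => 1) w = w.length := by
  induction w with
  | nil => rfl
  | cons a w ih => simp [sigmaStar] at ih ⊢; omega

lemma sigmaStar_append (σ : X → ℕ) (u v : List X) :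
    sigmaStar σ (u ++ v) = sigmaStar σ u + sigmaStar σ v := by
  simp [sigmaStar]

lemma sigmaSharp_eq (σ : X → ℕ) (w : List X) :
    sigmaSharp (fun _ => 1) σ w
      = ∑ i ∈ Finset.range w.length, σ (w.getD i default) * (i + 1) := by
  unfold sigmaSharp
  refine Finset.sum_congr rfl fun i hi => ?_
  rw [sigmaStar_one, List.length_take]
  simp only [Finset.mem_range] at hi
  congr 1
  omega

lemma sigmaSharp_concat (σ : X → ℕ) (w : List X) (a : X) :
    sigmaSharp (fun _ => 1) σ (w ++ [a])
      = sigmaSharp (fun _ => 1) σ w + σ a * (w.length + 1) := by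
  rw [sigmaSharp_eq, sigmaSharp_eq]
  rw [List.length_append, List.length_singleton, Finset.sum_range_succ]
  congr 1
  · refine Finset.sum_congr rfl fun i hi => ?_
    simp only [Finset.mem_range] at hi
    rw [List.getD_eq_getElem?_getD, List.getD_eq_getElem?_getD,
      List.getElem?_append_left hi]
  · rw [List.getD_eq_getElem?_getD]
    rw [show w.length = w.length + 0 from rfl, List.getElem?_append_right (by omega)]
    simp

def maxv (n m : ℕ) : ℕ := ∑ i ∈ Finset.range m, (n - i)

lemma maxv_zero (n : ℕ) : maxv n 0 = 0 := rfl

lemma maxv_succ (n m : ℕ) : maxv (n + 1) (m + 1) = maxv n m + (n + 1) := by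
  unfold maxv
  rw [Finset.sum_range_succ']
  simp [Nat.succ_sub_succ]

lemma maxv_mono (n m : ℕ) : maxv n m ≤ maxv (n + 1) m :=
  Finset.sum_le_sum fun i _ => by omega

lemma maxv_lt (n : ℕ) {m : ℕ} (hm : 1 ≤ m) : maxv n m < maxv (n + 1) m := by
  refine Finset.sum_lt_sum (fun i _ => by omega) ⟨0, Finset.mem_range.2 hm, by omega⟩

variable (S : Finset X)

def ind (S : Finset X) : X → ℕ := fun a => if a ∈ S then 1 else 0

lemma cnt_eq_countP (w : List X) :
    sigmaStar (ind S) w = w.countP (fun a => decide (a ∈ S)) := by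
  induction w with
  | nil => rfl
  | cons a w ih =>
    rw [List.countP_cons]
    simp [sigmaStar, ind] at ih ⊢
    by_cases h : a ∈ S <;> simp [h, ih] <;> omega

lemma cnt_le_length (w : List X) : sigmaStar (ind S) w ≤ w.length := by
  rw [cnt_eq_countP]; exact List.countP_le_length

lemma cnt_of_forall_mem {w : List X} (h : ∀ a ∈ w, a ∈ S) :
    sigmaStar (ind S) w = w.length := by
  rw [cnt_eq_countP]; exact List.countP_eq_length.2 (by simpa using h)

lemma cnt_of_forall_not_mem {w : List X} (h : ∀ a ∈ w, a ∉ S) :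
    sigmaStar (ind S) w = 0 := by
  rw [cnt_eq_countP]; exact List.countP_eq_zero.2 (by simpa using h)

lemma forall_not_mem_of_cnt_zero {w : List X} (h : sigmaStar (ind S) w = 0) :
    ∀ a ∈ w, a ∉ S := by
  rw [cnt_eq_countP] at h; simpa using List.countP_eq_zero.1 h

lemma shp_ub (w : List X) :
    sigmaSharp (fun _ => 1) (ind S) w ≤ maxv w.length (sigmaStar (ind S) w) := by
  induction w using List.reverseRecOn with
  | nil => simp [sigmaSharp, maxv]
  | append_singleton w a ih =>
    rw [sigmaSharp_concat, sigmaStar_append, List.length_append, List.length_singleton]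
    by_cases h : a ∈ S
    · have : sigmaStar (ind S) [a] = 1 := by simp [sigmaStar, ind, h]
      rw [this, maxv_succ]
      simp [ind, h]
      omega
    · have : sigmaStar (ind S) [a] = 0 := by simp [sigmaStar, ind, h]
      rw [this, Nat.add_zero]
      have := maxv_mono w.length (sigmaStar (ind S) w)
      simp [ind, h]
      omega

lemma shp_suffix (u v : List X) (h : ∀ a ∈ v, a ∉ S) :
    sigmaSharp (fun _ => 1) (ind S) (u ++ v) = sigmaSharp (fun _ => 1) (ind S) u := by
  induction v using List.reverseRecOn with
  | nil => simp
  | append_singleton v a ih =>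
    rw [← List.append_assoc, sigmaSharp_concat]
    have ha : a ∉ S := h a (by simp)
    rw [ih fun b hb => h b (by simp [hb])]
    simp [ind, ha]

lemma shp_lb (u v : List X) (h : ∀ a ∈ v, a ∈ S) :
    maxv (u.length + v.length) v.length ≤ sigmaSharp (fun _ => 1) (ind S) (u ++ v) := by
  induction v using List.reverseRecOn with
  | nil => simp [maxv]
  | append_singleton v a ih =>
    rw [← List.append_assoc, sigmaSharp_concat]
    have ha : a ∈ S := h a (by simp)
    have h2 := ih fun b hb => h b (by simp [hb])
    rw [List.length_append, List.length_singleton, ind]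
    simp only [ha, if_pos, List.length_append]
    rw [← Nat.add_assoc, maxv_succ]
    omega

lemma shp_structure (w : List X) {m : ℕ} (hc : sigmaStar (ind S) w = m)
    (hs : maxv w.length m ≤ sigmaSharp (fun _ => 1) (ind S) w) :
    ∃ u v, w = u ++ v ∧ v.length = m ∧ (∀ a ∈ v, a ∈ S) ∧ (∀ a ∈ u, a ∉ S) := by
  induction w using List.reverseRecOn generalizing m with
  | nil =>
    refine ⟨[], [], by simp, ?_, by simp, by simp⟩
    have hm : m = 0 := by simpa [sigmaStar] using hc.symm
    simp [hm]
  | append_singleton w a ih =>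
    by_cases ha : a ∈ S
    · have hca : sigmaStar (ind S) [a] = 1 := by simp [sigmaStar, ind, ha]
      rw [sigmaStar_append, hca] at hc
      obtain ⟨m', rfl⟩ : ∃ m', m = m' + 1 := ⟨sigmaStar (ind S) w, by omega⟩
      have hcw : sigmaStar (ind S) w = m' := by omega
      rw [sigmaSharp_concat, List.length_append, List.length_singleton, maxv_succ] at hs
      have hs' : maxv w.length m' ≤ sigmaSharp (fun _ => 1) (ind S) w := by
        simp [ind, ha] at hs; omega
      obtain ⟨u, v, rfl, hv, hvm, hum⟩ := ih hcw hs'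
      exact ⟨u, v ++ [a], by simp, by simp [hv], by
        intro b hb; rcases List.mem_append.1 hb with h | h
        exacts [hvm b h, by simpa using (List.mem_singleton.1 h ▸ ha)], hum⟩
    · have hca : sigmaStar (ind S) [a] = 0 := by simp [sigmaStar, ind, ha]
      rw [sigmaStar_append, hca, Nat.add_zero] at hc
      rcases Nat.eq_zero_or_pos m with rfl | hm
      · refine ⟨w ++ [a], [], by simp, rfl, by simp, ?_⟩
        intro b hb
        rcases List.mem_append.1 hb with h | h
        · exact forall_not_mem_of_cnt_zero S hc b h
        · simpa using (List.mem_singleton.1 h ▸ ha)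
      · exfalso
        have h1 : sigmaSharp (fun _ => 1) (ind S) (w ++ [a])
            = sigmaSharp (fun _ => 1) (ind S) w := by
          rw [sigmaSharp_concat]; simp [ind, ha]
        have h2 := shp_ub S w
        rw [hc] at h2
        have h3 := maxv_lt w.length hm
        rw [List.length_append, List.length_singleton] at hs
        omega


lemma sum_map_range (g : ℕ → ℕ) (m : ℕ) :
    ((List.range m).map g).sum = ∑ i ∈ Finset.range m, g i := by
  induction m with
  | zero => simp
  | succ m ih => rw [List.range_succ, Finset.sum_range_succ]; simp [ih]

lemma length_flatten_map_range (F : ℕ → List X) (m : ℕ) :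
    ((List.range m).map F).flatten.length = ∑ i ∈ Finset.range m, (F i).length := by
  rw [List.length_flatten, List.map_map, ← sum_map_range]
  rfl

lemma flatten_segments (kk : ℕ → ℕ) :
    ∀ (m : ℕ) (l : List X), l.length = ∑ i ∈ Finset.range m, kk i →
      l = ((List.range m).map
        (fun j => (l.drop (∑ i ∈ Finset.range j, kk i)).take (kk j))).flatten := by
  intro m
  induction m with
  | zero => intro l hl; simpa using (List.length_eq_zero_iff.1 (by simpa using hl)).symm
  | succ m ih =>
    intro l hl
    have hstep : ∀ j : ℕ, ∑ i ∈ Finset.range (j + 1), kk i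
        = (∑ i ∈ Finset.range j, kk i) + kk j := fun j => Finset.sum_range_succ _ _
    have hmono : ∀ {a b : ℕ}, a ≤ b →
        (∑ i ∈ Finset.range a, kk i) ≤ ∑ i ∈ Finset.range b, kk i := fun h =>
      Finset.sum_le_sum_of_subset (Finset.range_subset_range.2 h)
    have hpm : (∑ i ∈ Finset.range m, kk i) ≤ l.length := by
      rw [hl]; exact hmono (Nat.le_succ m)
    have h1 : (l.take (∑ i ∈ Finset.range m, kk i)).length
        = ∑ i ∈ Finset.range m, kk i := by
      rw [List.length_take]; omega
    have h2 := ih (l.take (∑ i ∈ Finset.range m, kk i)) h1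
    rw [List.range_succ, List.map_append, List.flatten_append]
    have hfirst : ((List.range m).map (fun j =>
        ((l.take (∑ i ∈ Finset.range m, kk i)).drop (∑ i ∈ Finset.range j, kk i)).take (kk j))).flatten
        = ((List.range m).map (fun j =>
        (l.drop (∑ i ∈ Finset.range j, kk i)).take (kk j))).flatten := by
      congr 1
      refine List.map_congr_left fun j hj => ?_
      have hj' := List.mem_range.1 hj
      rw [List.drop_take, List.take_take]
      congr 1
      have hs1 := hstep j
      have hs2 : (∑ i ∈ Finset.range (j + 1), kk i) ≤ ∑ i ∈ Finset.range m, kk i :=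
        hmono hj'
      omega
    have hlast : (l.drop (∑ i ∈ Finset.range m, kk i)).take (kk m)
        = l.drop (∑ i ∈ Finset.range m, kk i) := by
      refine List.take_of_length_le ?_
      rw [List.length_drop, hl, hstep m]
      omega
    conv_lhs => rw [← List.take_append_drop (∑ i ∈ Finset.range m, kk i) l]
    rw [← hfirst, ← h2]
    simp [hlast]

/-- `ofFn` as a map over `range`. -/
lemma ofFn_eq_range_map {m : ℕ} (g : Fin m → List X) :
    (List.ofFn g) = (List.range m).map
      (fun i => if h : i < m then g ⟨i, h⟩ else []) := by
  refine List.ext_getElem (by simp) fun i h1 h2 => ?_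
  simp only [List.getElem_ofFn, List.getElem_map, List.getElem_range]
  rw [dif_pos (by simpa using h1)]

lemma flatten_split (F : ℕ → List X) (m t r : ℕ) (ht : m = t + 1 + r) :
    ((List.range m).map F).flatten
      = ((List.range t).map F).flatten ++ F t
        ++ ((List.range r).map (fun i => F (t + 1 + i))).flatten := by
  subst ht
  rw [List.range_add, List.range_succ]
  simp [List.map_map, Function.comp_def]

lemma finRange_reverse_drop {s t : ℕ} (ht : t < s) :
    (List.finRange s).reverse.drop t
      = (⟨s - 1 - t, by omega⟩ : Fin s) :: (List.finRange s).reverse.drop (t + 1) := by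
  have hlen : t < (List.finRange s).reverse.length := by simpa using ht
  rw [List.drop_eq_getElem_cons hlen]
  congr 1
  rw [List.getElem_reverse]
  simp [List.getElem_finRange]


def extK {s : ℕ} (k : Fin (s + 1) → ℕ) : ℕ → ℕ :=
  fun i => if h : i < s + 1 then k ⟨i, h⟩ else 0

def extY {X : Type*} {s : ℕ} (Y : Fin (s + 1) → Finset X) : ℕ → Finset X :=
  fun i => if h : i < s + 1 then Y ⟨i, h⟩ else ∅

def extW {X : Type*} {s : ℕ} (ws : Fin (s + 1) → List X) : ℕ → List X :=
  fun i => if h : i < s + 1 then ws ⟨i, h⟩ else []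

def posf {s : ℕ} (k : Fin (s + 1) → ℕ) : ℕ → ℕ :=
  fun m => ∑ i ∈ Finset.range m, extK k i

lemma extK_coe {s : ℕ} (k : Fin (s + 1) → ℕ) (j : Fin (s + 1)) :
    extK k j.val = k j := by
  simp [extK]; intro h; exact absurd j.isLt (by omega)

lemma extY_coe {s : ℕ} (Y : Fin (s + 1) → Finset X) (j : Fin (s + 1)) :
    extY Y j.val = Y j := by
  simp [extY]; intro h; exact absurd j.isLt (by omega)

lemma posf_succ {s : ℕ} (k : Fin (s + 1) → ℕ) (m : ℕ) :
    posf k (m + 1) = posf k m + extK k m := Finset.sum_range_succ _ _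

lemma posf_mono {s : ℕ} (k : Fin (s + 1) → ℕ) {a b : ℕ} (h : a ≤ b) :
    posf k a ≤ posf k b :=
  Finset.sum_le_sum_of_subset (Finset.range_subset_range.2 h)

lemma posf_top {s : ℕ} (k : Fin (s + 1) → ℕ) : posf k (s + 1) = ∑ j, k j := by
  rw [posf, ← Fin.sum_univ_eq_sum_range]
  exact Finset.sum_congr rfl fun j _ => extK_coe k j

lemma w1_facts {s : ℕ} (Y : Fin (s + 1) → Finset X)
    (hdisj : ∀ j j' : Fin (s + 1), j ≠ j' → Disjoint (Y j) (Y j'))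
    (k : Fin (s + 1) → ℕ) (ws₁ : Fin (s + 1) → List X)
    (hws₁ : ∀ j, (ws₁ j).length = k j ∧ ∀ a ∈ ws₁ j, a ∈ Y j)
    (jj : ℕ) (hjj : jj ≤ s) :
    sigmaStar (ind (extY Y jj)) (List.ofFn ws₁).flatten = extK k jj ∧
      maxv (posf k (jj + 1)) (extK k jj)
        ≤ sigmaSharp (fun _ => 1) (ind (extY Y jj)) (List.ofFn ws₁).flatten := by
  have hjj1 : jj < s + 1 := by omega
  have hFlen : ∀ i, (extW ws₁ i).length = extK k i := by
    intro i; unfold extW extK; split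
    · exact (hws₁ _).1
    · rfl
  have hFmem : ∀ i (h : i < s + 1), ∀ a ∈ extW ws₁ i, a ∈ Y ⟨i, h⟩ := by
    intro i h a ha
    rw [extW, dif_pos h] at ha
    exact (hws₁ _).2 a ha
  have hYjj : extY Y jj = Y ⟨jj, hjj1⟩ := dif_pos hjj1
  have hnotY : ∀ i (h : i < s + 1), i ≠ jj → ∀ a ∈ extW ws₁ i, a ∉ extY Y jj := by
    intro i h hne a ha hmem
    rw [hYjj] at hmem
    exact Finset.disjoint_left.1
      (hdisj ⟨i, h⟩ ⟨jj, hjj1⟩ (by simp [Fin.ext_iff]; omega)) (hFmem i h a ha) hmem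
  have hofn : (List.ofFn ws₁) = (List.range (s + 1)).map (extW ws₁) :=
    ofFn_eq_range_map ws₁
  have hsplit := flatten_split (extW ws₁) (s + 1) jj (s - jj) (by omega)
  set Q := ((List.range jj).map (extW ws₁)).flatten with hQ
  set R := ((List.range (s - jj)).map (fun i => extW ws₁ (jj + 1 + i))).flatten with hR
  have hw : (List.ofFn ws₁).flatten = (Q ++ extW ws₁ jj) ++ R := by
    rw [hofn, hsplit]
  have hQlen : Q.length = posf k jj := by
    rw [hQ, length_flatten_map_range]
    exact Finset.sum_congr rfl fun i _ => hFlen i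
  have hQmem : ∀ a ∈ Q, a ∉ extY Y jj := by
    intro a ha
    rw [hQ, List.mem_flatten] at ha
    obtain ⟨l, hl, hal⟩ := ha
    rw [List.mem_map] at hl
    obtain ⟨i, hi, rfl⟩ := hl
    have hi' := List.mem_range.1 hi
    exact hnotY i (by omega) (by omega) a hal
  have hRmem : ∀ a ∈ R, a ∉ extY Y jj := by
    intro a ha
    rw [hR, List.mem_flatten] at ha
    obtain ⟨l, hl, hal⟩ := ha
    rw [List.mem_map] at hl
    obtain ⟨i, hi, rfl⟩ := hl
    have hi' := List.mem_range.1 hi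
    exact hnotY (jj + 1 + i) (by omega) (by omega) a hal
  have hVmem : ∀ a ∈ extW ws₁ jj, a ∈ extY Y jj := by
    intro a ha
    rw [hYjj]
    exact hFmem jj hjj1 a ha
  have hVlen : (extW ws₁ jj).length = extK k jj := hFlen jj
  constructor
  · rw [hw, sigmaStar_append, sigmaStar_append,
      cnt_of_forall_not_mem _ hQmem, cnt_of_forall_not_mem _ hRmem,
      cnt_of_forall_mem _ hVmem, hVlen]
    omega
  · rw [hw, shp_suffix _ _ _ hRmem]
    have := shp_lb (extY Y jj) Q (extW ws₁ jj) hVmem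
    rwa [hQlen, hVlen, ← posf_succ] at this

end Stmt7

open Stmt7 in
/-- Proposition: let `X = Y₀ ⊔ ⋯ ⊔ Y_s`, `n = k₀ + ⋯ + k_s`, `σ_j` the indicator
of `Y_j` (for `j = 1,…,s`), and `≤_g` the lexicographic construction with the
constant weight `τ = 1`.  Let `C ⊆ Xⁿ`, let `A` be the set of words in `C` having
at most `k_j` letters from `Y_j` for each `j = 1,…,s`, and
`B = C ∩ (Y₀^{k₀} × ⋯ × Y_s^{k_s})`.  Then `w₁ ∈ B`, `w₂ ∈ A`, `w₁ ≤_g w₂`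
imply `w₂ ∈ B`. -/
theorem stmt_7 {X : Type*} [Inhabited X] [Fintype X] [LinearOrder X] [DecidableEq X]
    {s : ℕ} (Y : Fin (s + 1) → Finset X)
    (hcover : ∀ a : X, ∃ j, a ∈ Y j)
    (hdisj : ∀ j j' : Fin (s + 1), j ≠ j' → Disjoint (Y j) (Y j'))
    (k : Fin (s + 1) → ℕ) (n : ℕ) (hn : n = ∑ j, k j)
    (C : Set (List X)) (hC : ∀ w ∈ C, w.length = n)
    (A B : Set (List X))
    (hA : ∀ w, w ∈ A ↔ (w ∈ C ∧ ∀ j : Fin s,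
      w.countP (fun a => decide (a ∈ Y j.succ)) ≤ k j.succ))
    (hB : ∀ w, w ∈ B ↔ (w ∈ C ∧ ∃ ws : Fin (s + 1) → List X,
      w = (List.ofFn ws).flatten ∧
      ∀ j, (ws j).length = k j ∧ ∀ a ∈ ws j, a ∈ Y j))
    (w₁ w₂ : List X) (hw₁ : w₁ ∈ B) (hw₂ : w₂ ∈ A)
    (hle : gLe (fun _ => 1) (fun j a => if a ∈ Y j.succ then 1 else 0) w₁ w₂) :
    w₂ ∈ B := by
  obtain ⟨hw₁C, ws₁, hw₁eq, hws₁⟩ := (hB w₁).1 hw₁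
  obtain ⟨hw₂C, hw₂cnt⟩ := (hA w₂).1 hw₂
  have hl₁ : w₁.length = n := hC w₁ hw₁C
  have hl₂ : w₂.length = n := hC w₂ hw₂C
  have hpos_top : posf k (s + 1) = n := by rw [posf_top]; omega
  have hkey : ∀ jj, jj ≤ s →
      sigmaStar (ind (extY Y jj)) w₁ = extK k jj ∧
      maxv (posf k (jj + 1)) (extK k jj)
        ≤ sigmaSharp (fun _ => 1) (ind (extY Y jj)) w₁ := by
    intro jj h
    have := w1_facts Y hdisj k ws₁ hws₁ jj h
    rwa [← hw₁eq] at this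
  have hextdisj : ∀ (i j : ℕ), i ≠ j → ∀ a : X,
      a ∈ extY Y i → a ∉ extY Y j := by
    intro i j hne a hai haj
    by_cases hi : i < s + 1
    · by_cases hj : j < s + 1
      · rw [extY, dif_pos hi] at hai
        rw [extY, dif_pos hj] at haj
        exact Finset.disjoint_left.1
          (hdisj ⟨i, hi⟩ ⟨j, hj⟩ (by simp [Fin.ext_iff]; omega)) hai haj
      · rw [extY, dif_neg hj] at haj; simp at haj
    · rw [extY, dif_neg hi] at hai; simp at hai
  have main : ∀ t : ℕ, t ≤ s →
      keysLe (((List.finRange s).reverse.drop t).flatMap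
        (fun j => [sigmaStar (fun a => if a ∈ Y j.succ then 1 else 0),
          sigmaSharp (fun _ => 1) (fun a => if a ∈ Y j.succ then 1 else 0)])) w₁ w₂
      ∧ (∀ a ∈ w₂.take (posf k (s + 1 - t)), ∀ j, s + 1 - t ≤ j → a ∉ extY Y j)
      ∧ (∀ a ∈ w₂.drop (posf k (s + 1 - t)), ∀ j, j ≤ s - t → a ∉ extY Y j)
      ∧ (∀ j, s + 1 - t ≤ j →
          ∀ a ∈ (w₂.drop (posf k j)).take (extK k j), a ∈ extY Y j) := by
    intro t
    induction t with
    | zero =>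
      intro _
      rw [Nat.sub_zero]
      refine ⟨?_, ?_, ?_, ?_⟩
      · unfold gLe at hle
        rcases hle with h | ⟨_, h⟩
        · rw [sigmaStar_one, sigmaStar_one, hl₁, hl₂] at h; omega
        · simpa using h
      · intro a _ j hj
        rw [extY, dif_neg (by omega)]
        simp
      · intro a ha
        rw [hpos_top, ← hl₂, List.drop_length] at ha
        simp at ha
      · intro j hj a ha
        rw [extK, dif_neg (by omega)] at ha
        simp at ha
    | succ t IH =>
      intro ht
      have ht' : t < s := by omega
      obtain ⟨IH1, IH2, IH3, IH4⟩ := IH (by omega)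
      set jj := s - t with hjjdef
      have hjjs : jj ≤ s := by omega
      have hjj1 : 1 ≤ jj := by omega
      have hidx1 : s + 1 - t = jj + 1 := by omega
      have hidx2 : s + 1 - (t + 1) = jj := by omega
      rw [hidx1] at IH2 IH3
      set jF : Fin s := ⟨s - 1 - t, by omega⟩ with hjF
      have hsuccval : (jF.succ : Fin (s + 1)).val = jj := by
        rw [Fin.val_succ]; simp [hjF]; omega
      have hYeq : Y jF.succ = extY Y jj := by
        rw [← hsuccval]; exact (extY_coe Y jF.succ).symm
      have hkeq : k jF.succ = extK k jj := by
        rw [← hsuccval]; exact (extK_coe k jF.succ).symm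
      have hfun : (fun a => if a ∈ Y jF.succ then 1 else 0) = ind (extY Y jj) := by
        funext a; rw [ind, hYeq]
      rw [finRange_reverse_drop ht', List.flatMap_cons] at IH1
      simp only [List.cons_append, List.nil_append] at IH1
      rw [show (⟨s - 1 - t, by omega⟩ : Fin s) = jF from rfl] at IH1
      rw [hfun] at IH1
      simp only [keysLe] at IH1
      -- count of w₂
      have hcnt₂le : sigmaStar (ind (extY Y jj)) w₂ ≤ extK k jj := by
        rw [cnt_eq_countP]
        have h := hw₂cnt jF
        rw [hkeq] at h
        have : (fun a => decide (a ∈ Y jF.succ))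
            = (fun a => decide (a ∈ extY Y jj)) := by
          funext a; rw [hYeq]
        rwa [this] at h
      obtain ⟨hcnt₁, hshp₁⟩ := hkey jj hjjs
      rcases IH1 with h | ⟨hceq, IH1'⟩
      · omega
      have hcnt₂ : sigmaStar (ind (extY Y jj)) w₂ = extK k jj := by omega
      -- prefix and suffix of w₂
      have hpos1n : posf k (jj + 1) ≤ n := by
        rw [← hpos_top]; exact posf_mono k (by omega)
      have hsufno : ∀ a ∈ w₂.drop (posf k (jj + 1)), a ∉ extY Y jj :=
        fun a ha => IH3 a ha jj (le_refl _)
      have hcntsuf : sigmaStar (ind (extY Y jj)) (w₂.drop (posf k (jj + 1))) = 0 :=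
        cnt_of_forall_not_mem _ hsufno
      have hcntsplit : sigmaStar (ind (extY Y jj)) w₂
          = sigmaStar (ind (extY Y jj)) (w₂.take (posf k (jj + 1))) := by
        conv_lhs => rw [← List.take_append_drop (posf k (jj + 1)) w₂]
        rw [sigmaStar_append, hcntsuf]
        omega
      have hshpsplit : sigmaSharp (fun _ => 1) (ind (extY Y jj)) w₂
          = sigmaSharp (fun _ => 1) (ind (extY Y jj)) (w₂.take (posf k (jj + 1))) := by
        conv_lhs => rw [← List.take_append_drop (posf k (jj + 1)) w₂]
        rw [shp_suffix _ _ _ hsufno]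
      have hpreflen : (w₂.take (posf k (jj + 1))).length = posf k (jj + 1) := by
        rw [List.length_take]; omega
      have hcntpre : sigmaStar (ind (extY Y jj)) (w₂.take (posf k (jj + 1)))
          = extK k jj := by rw [← hcntsplit]; exact hcnt₂
      have hub₂ : sigmaSharp (fun _ => 1) (ind (extY Y jj)) w₂
          ≤ maxv (posf k (jj + 1)) (extK k jj) := by
        rw [hshpsplit]
        have := shp_ub (extY Y jj) (w₂.take (posf k (jj + 1)))
        rwa [hpreflen, hcntpre] at this
      rcases IH1' with h | ⟨hseq, hrest⟩
      · omega
      -- structure of the prefix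
      have hshppre : maxv (w₂.take (posf k (jj + 1))).length (extK k jj)
          ≤ sigmaSharp (fun _ => 1) (ind (extY Y jj)) (w₂.take (posf k (jj + 1))) := by
        rw [hpreflen, ← hshpsplit]
        omega
      obtain ⟨u, v, hpre, hvlen, hvmem, humem⟩ :=
        shp_structure (extY Y jj) (w₂.take (posf k (jj + 1))) hcntpre hshppre
      have hulen : u.length = posf k jj := by
        have h1 : u.length + v.length = posf k (jj + 1) := by
          rw [← List.length_append, ← hpre, hpreflen]
        have h2 := posf_succ k jj
        omega
      have hw₂split : w₂ = (u ++ v) ++ w₂.drop (posf k (jj + 1)) := by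
        conv_lhs => rw [← List.take_append_drop (posf k (jj + 1)) w₂]
        rw [hpre]
      have htake : w₂.take (posf k jj) = u := by
        conv_lhs => rw [hw₂split, List.append_assoc]
        rw [← hulen, List.take_left]
      have hdropjj : w₂.drop (posf k jj) = v ++ w₂.drop (posf k (jj + 1)) := by
        conv_lhs => rw [hw₂split, List.append_assoc]
        rw [← hulen, List.drop_left]
      have hsegjj : (w₂.drop (posf k jj)).take (extK k jj) = v := by
        rw [hdropjj, ← hvlen, List.take_left]
      rw [hidx2]
      refine ⟨hrest, ?_, ?_, ?_⟩
      · -- new prefix condition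
        intro a ha j hj
        rw [htake] at ha
        rcases Nat.lt_or_ge jj j with hlt | hge
        · refine IH2 a ?_ j (by omega)
          rw [hpre]
          exact List.mem_append_left _ ha
        · have : j = jj := by omega
          rw [this]
          exact humem a ha
      · -- new suffix condition
        intro a ha j hj
        rw [hdropjj] at ha
        rcases List.mem_append.1 ha with h | h
        · exact hextdisj jj j (by omega) a (hvmem a h)
        · exact IH3 a h j (by omega)
      · -- segments
        intro j hj a ha
        rcases Nat.lt_or_ge jj j with hlt | hge
        · exact IH4 j (by omega) a ha
        · have : j = jj := by omega
          rw [this] at ha ⊢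
          rw [hsegjj] at ha
          exact hvmem a ha
  obtain ⟨_, hfin2, _, hfin4⟩ := main s (le_refl s)
  rw [show s + 1 - s = 1 from by omega] at hfin2 hfin4
  -- build the decomposition of w₂
  have hflat := flatten_segments (extK k) (s + 1) w₂
    (by rw [hl₂]; exact hpos_top.symm)
  refine (hB w₂).2 ⟨hw₂C, fun j => (w₂.drop (posf k j.val)).take (extK k j.val), ?_, ?_⟩
  · rw [ofFn_eq_range_map]
    conv_lhs => rw [hflat]
    congr 1
    refine List.map_congr_left fun i hi => ?_
    have h : i < s + 1 := List.mem_range.1 hi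
    rw [dif_pos h]
    rfl
  · intro j
    constructor
    · rw [List.length_take, List.length_drop, hl₂]
      have h1 : posf k (j.val + 1) ≤ n := by
        rw [← hpos_top]; exact posf_mono k j.isLt
      have h2 := posf_succ k j.val
      rw [← extK_coe k j]
      omega
    · intro a ha'
      have ha : a ∈ (w₂.drop (posf k j.val)).take (extK k j.val) := ha'
      rcases Nat.eq_zero_or_pos j.val with hj0 | hj1
      · -- j = 0
        have ha' : a ∈ w₂.take (posf k 1) := by
          rw [hj0] at ha
          rw [show posf k 0 = 0 from by simp [posf], List.drop_zero] at ha
          rw [show posf k 1 = extK k 0 from by simp [posf]]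
          exact ha
        obtain ⟨j₀, hj₀⟩ := hcover a
        rcases Nat.eq_zero_or_pos j₀.val with h0 | h1
        · have : j₀ = j := Fin.ext (by omega)
          rwa [← this]
        · exact absurd ((extY_coe Y j₀) ▸ hj₀ : a ∈ extY Y j₀.val)
            (hfin2 a ha' j₀.val h1)
      · have := hfin4 j.val hj1 a ha
        rwa [extY_coe Y j] at this
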